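/- arXiv:2512.12848 — 3 statements merged into one kernel-verified Lean document; each statement's English description precedes it below -/
import Mathlib

section
/- Assume μ(γ⁰, s₀) = λ and that a := ∂_s μ(γ⁰, s₀) is a nonzero real number. Then there exist r₀ > 0 and δ₀ > 0 such that: (i) for every real γ with ‖γ − γ⁰‖ < r₀ and every s ∈ ℂ with Re s ∈ (s₀ − δ₀, s₀ + δ₀) and Im s ∈ (0, δ₀), one has μ(γ, s) ≠ λ; (ii) if a > 0, then for every such real γ and every sufficiently small ε > 0 the equation μ(γ, s) = λ + iε has exactly one solution s with Re s ∈ (s₀ − δ₀, s₀ + δ₀) and Im s ∈ (0, δ₀); and (iii) if a < 0, this equation has no solution in that region. -/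
open Set Complex

set_option maxHeartbeats 2000000 in
/-- Let `μ : ℂ^{n-1} × ℂ → ℂ` be analytic near a real point
`(γ⁰, s₀)` and real-valued at real points of this neighborhood, with
`μ(γ⁰, s₀) = λ` and `a := ∂_s μ(γ⁰, s₀)` a nonzero real number.  Then there are
`r₀, δ₀ > 0` such that: (i) for every real `γ` with `‖γ - γ⁰‖ < r₀` and every
`s ∈ (s₀-δ₀, s₀+δ₀) + i(0, δ₀)` one has `μ(γ, s) ≠ λ`; (ii) if `a > 0`, for every
such `γ` and all sufficiently small `ε > 0` the equation `μ(γ, s) = λ + iε` has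
exactly one solution `s` in this complex box; (iii) if `a < 0`, no solution. -/
theorem level_set_complex_box_nondegenerate
    (m : ℕ) (μ : ((Fin m → ℂ) × ℂ) → ℂ)
    (γ₀ : Fin m → ℝ) (s₀ : ℝ) (lam : ℝ)
    (V : Set ((Fin m → ℂ) × ℂ)) (hV : IsOpen V)
    (hmem : ((fun i => (γ₀ i : ℂ)), (s₀ : ℂ)) ∈ V)
    (hμan : AnalyticOnNhd ℂ μ V)
    (hreal : ∀ (γ : Fin m → ℝ) (t : ℝ),
      ((fun i => (γ i : ℂ)), (t : ℂ)) ∈ V → (μ ((fun i => (γ i : ℂ)), (t : ℂ))).im = 0)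
    (hval : μ ((fun i => (γ₀ i : ℂ)), (s₀ : ℂ)) = (lam : ℂ))
    (a : ℝ) (ha : a ≠ 0)
    (hds : deriv (fun z : ℂ => μ ((fun i => (γ₀ i : ℂ)), z)) (s₀ : ℂ) = (a : ℂ)) :
    ∃ r₀ > (0 : ℝ), ∃ δ₀ > (0 : ℝ),
      (∀ γ : Fin m → ℝ, ‖γ - γ₀‖ < r₀ → ∀ s : ℂ,
        s.re ∈ Ioo (s₀ - δ₀) (s₀ + δ₀) → s.im ∈ Ioo 0 δ₀ →
          μ ((fun i => (γ i : ℂ)), s) ≠ (lam : ℂ)) ∧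
      (0 < a → ∀ γ : Fin m → ℝ, ‖γ - γ₀‖ < r₀ →
        ∃ ε₁ > (0 : ℝ), ∀ ε : ℝ, 0 < ε → ε < ε₁ →
          ∃! s : ℂ, s.re ∈ Ioo (s₀ - δ₀) (s₀ + δ₀) ∧ s.im ∈ Ioo 0 δ₀ ∧
            μ ((fun i => (γ i : ℂ)), s) = (lam : ℂ) + Complex.I * (ε : ℂ)) ∧
      (a < 0 → ∀ γ : Fin m → ℝ, ‖γ - γ₀‖ < r₀ →
        ∃ ε₁ > (0 : ℝ), ∀ ε : ℝ, 0 < ε → ε < ε₁ →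
          ¬ ∃ s : ℂ, s.re ∈ Ioo (s₀ - δ₀) (s₀ + δ₀) ∧ s.im ∈ Ioo 0 δ₀ ∧
            μ ((fun i => (γ i : ℂ)), s) = (lam : ℂ) + Complex.I * (ε : ℂ)) := by
  have ha' : (0:ℝ) < |a| := abs_pos.mpr ha
  set c : (Fin m → ℝ) → (Fin m → ℂ) := fun γ i => (γ i : ℂ) with hc
  set p₀ : (Fin m → ℂ) × ℂ := (c γ₀, (s₀ : ℂ)) with hp₀
  set h : ((Fin m → ℂ) × ℂ) → ℂ := fun p => fderiv ℂ μ p (0, 1) with hh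
  -- norms of coerced real vectors
  have hnormcoe : ∀ γ γ' : Fin m → ℝ, ‖c γ - c γ'‖ = ‖γ - γ'‖ := by
    intro γ γ'
    simp only [hc, Pi.norm_def]
    congr 1
    apply Finset.sup_congr rfl
    intro i _
    simp [Pi.sub_apply, ← Complex.ofReal_sub]
  have hdistcoe : ∀ γ γ' : Fin m → ℝ, dist (c γ) (c γ') = ‖γ - γ'‖ := by
    intro γ γ'; rw [dist_eq_norm, hnormcoe]
  -- the slice derivative
  have hderiv : ∀ (x : Fin m → ℂ) (z : ℂ), (x, z) ∈ V →
      HasDerivAt (fun w => μ (x, w)) (h (x, z)) z := by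
    intro x z hp
    have h1 : HasDerivAt (fun w : ℂ => ((x, w) : (Fin m → ℂ) × ℂ)) ((0 : Fin m → ℂ), (1:ℂ)) z :=
      (hasDerivAt_const z x).prodMk (hasDerivAt_id z)
    exact (hμan _ hp).differentiableAt.hasFDerivAt.comp_hasDerivAt z h1
  have ha2 : h p₀ = (a : ℂ) := by
    have := (hderiv (c γ₀) (s₀ : ℂ) hmem).deriv
    rw [← this]; exact hds
  -- continuity of h, choice of R
  have hcont : ContinuousAt h p₀ := by
    have h1 : ContinuousOn h V :=
      ((hμan.fderiv_of_isOpen hV).continuousOn).clm_apply continuousOn_const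
    exact h1.continuousAt (hV.mem_nhds hmem)
  obtain ⟨R₁, hR₁, hball⟩ := Metric.continuousAt_iff.mp hcont (|a|/4) (by positivity)
  obtain ⟨R₂, hR₂, hVball⟩ := Metric.isOpen_iff.mp hV p₀ hmem
  set R : ℝ := min R₁ R₂ with hR
  have hRpos : 0 < R := lt_min hR₁ hR₂
  have hD : ∀ p : (Fin m → ℂ) × ℂ, dist p p₀ < R → p ∈ V ∧ ‖h p - (a:ℂ)‖ < |a|/4 := by
    intro p hp
    refine ⟨hVball (Metric.mem_ball.mpr (lt_of_lt_of_le hp (min_le_right _ _))), ?_⟩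
    have := hball (lt_of_lt_of_le hp (min_le_left _ _))
    rwa [dist_eq_norm, ha2] at this
  have hmemD : ∀ γ : Fin m → ℝ, ‖γ - γ₀‖ < R → ∀ z : ℂ, dist z (s₀:ℂ) < R →
      ((c γ, z) ∈ V ∧ ‖h (c γ, z) - (a:ℂ)‖ < |a|/4) := by
    intro γ hγ z hz
    apply hD
    rw [Prod.dist_eq]
    exact max_lt (by rw [hdistcoe]; exact hγ) hz
  -- mean value estimate
  have hkey : ∀ γ : Fin m → ℝ, ‖γ - γ₀‖ < R → ∀ z ∈ Metric.ball (s₀:ℂ) R,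
      ∀ w ∈ Metric.ball (s₀:ℂ) R,
      ‖μ (c γ, z) - μ (c γ, w) - (a:ℂ) * (z - w)‖ ≤ |a|/4 * ‖z - w‖ := by
    intro γ hγ z hz w hw
    have hmv := (convex_ball (s₀:ℂ) R).norm_image_sub_le_of_norm_hasDerivWithin_le
      (f := fun z => μ (c γ, z) - (a:ℂ) * z) (f' := fun z => h (c γ, z) - (a:ℂ))
      (C := |a|/4) ?_ ?_ hw hz
    · have heq : μ (c γ, z) - (a:ℂ) * z - (μ (c γ, w) - (a:ℂ) * w)
          = μ (c γ, z) - μ (c γ, w) - (a:ℂ) * (z - w) := by ring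
      rwa [heq] at hmv
    · intro x hx
      have h1 : HasDerivAt (fun z : ℂ => (a:ℂ) * z) (a:ℂ) x := by
        simpa using (hasDerivAt_id x).const_mul (a:ℂ)
      exact (((hderiv (c γ) x (hmemD γ hγ x (Metric.mem_ball.mp hx)).1)).sub
        h1).hasDerivWithinAt
    · intro x hx
      exact (hmemD γ hγ x (Metric.mem_ball.mp hx)).2.le
  -- lower bound (injectivity)
  have hinj : ∀ γ : Fin m → ℝ, ‖γ - γ₀‖ < R → ∀ z ∈ Metric.ball (s₀:ℂ) R,
      ∀ w ∈ Metric.ball (s₀:ℂ) R,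
      3*|a|/4 * ‖z - w‖ ≤ ‖μ (c γ, z) - μ (c γ, w)‖ := by
    intro γ hγ z hz w hw
    have h1 := hkey γ hγ z hz w hw
    have h2 : ‖(a:ℂ) * (z - w)‖ = |a| * ‖z - w‖ := by
      rw [norm_mul, Complex.norm_real, Real.norm_eq_abs]
    have h3 : ‖(a:ℂ) * (z - w)‖ ≤ ‖μ (c γ, z) - μ (c γ, w)‖
        + ‖μ (c γ, z) - μ (c γ, w) - (a:ℂ) * (z - w)‖ := by
      have h4 : ‖(a:ℂ) * (z - w)‖
          = ‖(μ (c γ, z) - μ (c γ, w)) - (μ (c γ, z) - μ (c γ, w) - (a:ℂ) * (z - w))‖ := by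
        congr 1; ring
      rw [h4]; exact norm_sub_le _ _
    rw [h2] at h3
    linarith
  -- imaginary part estimate
  have hIm : ∀ γ : Fin m → ℝ, ‖γ - γ₀‖ < R → ∀ s ∈ Metric.ball (s₀:ℂ) R,
      |(μ (c γ, s)).im - a * s.im| ≤ |a|/4 * |s.im| := by
    intro γ hγ s hs
    have hs' := Metric.mem_ball.mp hs
    set w : ℂ := (s.re : ℂ) with hw
    have hwball : w ∈ Metric.ball (s₀:ℂ) R := by
      rw [Metric.mem_ball, Complex.dist_eq]
      calc ‖w - (s₀:ℂ)‖ = |s.re - s₀| := by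
            rw [hw, ← Complex.ofReal_sub, Complex.norm_real, Real.norm_eq_abs]
        _ ≤ ‖s - (s₀:ℂ)‖ := by
            have := Complex.abs_re_le_norm (s - (s₀:ℂ))
            simpa using this
        _ < R := by rwa [Complex.dist_eq] at hs'
    have hwV : (c γ, w) ∈ V := (hmemD γ hγ w (Metric.mem_ball.mp hwball)).1
    have hwreal : (μ (c γ, w)).im = 0 := hreal γ s.re hwV
    have hsw : s - w = (s.im : ℂ) * Complex.I := by
      apply Complex.ext <;> simp [hw]
    have hnorm : ‖s - w‖ = |s.im| := by
      rw [hsw, norm_mul, Complex.norm_real, Complex.norm_I, Real.norm_eq_abs, mul_one]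
    have him : (μ (c γ, s) - μ (c γ, w) - (a:ℂ) * (s - w)).im
        = (μ (c γ, s)).im - a * s.im := by
      rw [hsw]
      simp [Complex.sub_im, Complex.mul_im, hwreal]
    calc |(μ (c γ, s)).im - a * s.im|
        = |(μ (c γ, s) - μ (c γ, w) - (a:ℂ) * (s - w)).im| := by rw [him]
      _ ≤ ‖μ (c γ, s) - μ (c γ, w) - (a:ℂ) * (s - w)‖ := Complex.abs_im_le_norm _
      _ ≤ |a|/4 * ‖s - w‖ := hkey γ hγ s hs w hwball
      _ = |a|/4 * |s.im| := by rw [hnorm]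
  -- continuity of μ at p₀, choice of r₁
  set e : ℝ := 3*|a|/4 * (R/16) with he
  have hepos : 0 < e := by positivity
  obtain ⟨r₁, hr₁, hμball⟩ := Metric.continuousAt_iff.mp ((hμan _ hmem).continuousAt) e hepos
  set δ₀ : ℝ := R/4 with hδ₀
  set r₀ : ℝ := min (R/4) r₁ with hr₀
  have hr₀pos : 0 < r₀ := lt_min (by positivity) hr₁
  have hδ₀pos : 0 < δ₀ := by positivity
  -- box points are in the ball of radius R
  have hbox : ∀ s : ℂ, s.re ∈ Ioo (s₀ - δ₀) (s₀ + δ₀) → s.im ∈ Ioo 0 δ₀ →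
      dist s (s₀:ℂ) < R := by
    intro s hre him
    rw [Complex.dist_eq]
    calc ‖s - (s₀:ℂ)‖ ≤ |(s - (s₀:ℂ)).re| + |(s - (s₀:ℂ)).im| :=
          Complex.norm_le_abs_re_add_abs_im _
      _ = |s.re - s₀| + |s.im| := by simp
      _ < δ₀ + δ₀ := by
          apply add_lt_add
          · rw [abs_lt]; constructor <;> [linarith [hre.1]; linarith [hre.2]]
          · rw [abs_lt]; constructor <;> [linarith [him.1]; linarith [him.2]]
      _ ≤ R := by rw [hδ₀]; linarith
  have hr₀R : r₀ ≤ R := le_trans (min_le_left _ _) (by linarith)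
  refine ⟨r₀, hr₀pos, δ₀, hδ₀pos, ?_, ?_, ?_⟩
  · -- (i)
    intro γ hγ s hre him heq
    have hγR : ‖γ - γ₀‖ < R := lt_of_lt_of_le hγ hr₀R
    have hsball : s ∈ Metric.ball (s₀:ℂ) R := Metric.mem_ball.mpr (hbox s hre him)
    have h1 := hIm γ hγR s hsball
    rw [show μ ((fun i => (γ i : ℂ)), s) = μ (c γ, s) from rfl] at heq
    rw [heq] at h1
    simp only [Complex.ofReal_im, zero_sub, abs_neg, abs_mul] at h1
    have h2 : |s.im| = s.im := abs_of_pos him.1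
    rw [h2] at h1
    nlinarith [him.1, ha']
  · -- (ii)
    intro hapos γ hγ
    have haa : |a| = a := abs_of_pos hapos
    have hγR : ‖γ - γ₀‖ < R := lt_of_lt_of_le hγ hr₀R
    set g : ℂ → ℂ := fun z => μ (c γ, z) with hg
    set f : ℝ → ℝ := fun t => (g (t:ℂ)).re with hf
    have hmemball : ∀ t : ℝ, |t - s₀| < R → ((t:ℂ) ∈ Metric.ball (s₀:ℂ) R) := by
      intro t ht
      rw [Metric.mem_ball, Complex.dist_eq, ← Complex.ofReal_sub, Complex.norm_real, Real.norm_eq_abs]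
      exact ht
    have hrealt : ∀ t : ℝ, |t - s₀| < R → g (t:ℂ) = ((f t : ℝ) : ℂ) := by
      intro t ht
      have h1 : (c γ, (t:ℂ)) ∈ V := (hmemD γ hγR (t:ℂ) (Metric.mem_ball.mp (hmemball t ht))).1
      have h2 := hreal γ t h1
      apply Complex.ext
      · simp [hf]
      · simp [hf]; exact h2
    -- monotonicity estimate on reals
    have hmono : ∀ t₁ t₂ : ℝ, |t₁ - s₀| < R → |t₂ - s₀| < R → t₁ ≤ t₂ →
        3*a/4 * (t₂ - t₁) ≤ f t₂ - f t₁ := by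
      intro t₁ t₂ h₁ h₂ h₁₂
      have hk := hkey γ hγR (t₂:ℂ) (hmemball t₂ h₂) (t₁:ℂ) (hmemball t₁ h₁)
      have hre : (g (t₂:ℂ) - g (t₁:ℂ) - (a:ℂ) * ((t₂:ℂ) - (t₁:ℂ))).re
          = f t₂ - f t₁ - a * (t₂ - t₁) := by
        simp [hf, hg, Complex.sub_re, Complex.mul_re]
      have h3 : |f t₂ - f t₁ - a * (t₂ - t₁)|
          ≤ |a|/4 * ‖(t₂:ℂ) - (t₁:ℂ)‖ := by
        rw [← hre]
        exact (Complex.abs_re_le_norm _).trans hk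
      rw [← Complex.ofReal_sub, Complex.norm_real, Real.norm_eq_abs] at h3
      have h4 : |t₂ - t₁| = t₂ - t₁ := abs_of_nonneg (by linarith)
      rw [h4, haa] at h3
      have h5 := (abs_le.mp h3).1
      linarith
    -- value of g at s₀ is close to lam
    have hμs₀ : |f s₀ - lam| < e := by
      have h1 : dist ((c γ, (s₀:ℂ))) p₀ < r₁ := by
        rw [Prod.dist_eq]
        apply max_lt
        · rw [hdistcoe]; exact lt_of_lt_of_le hγ (min_le_right _ _)
        · simpa [hp₀] using hr₁
      have h2 := hμball h1
      rw [hval] at h2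
      have h3 : g (s₀:ℂ) = ((f s₀ : ℝ) : ℂ) := hrealt s₀ (by simpa using hRpos)
      rw [Complex.dist_eq, show μ (c γ, (s₀:ℂ)) = g (s₀:ℂ) from rfl, h3,
        ← Complex.ofReal_sub, Complex.norm_real, Real.norm_eq_abs] at h2
      exact h2
    -- IVT gives a real root t
    have hR16 : |(R/16 : ℝ)| < R := by rw [abs_of_pos (by positivity)]; linarith
    have hfc : ContinuousOn f (Icc (s₀ - R/16) (s₀ + R/16)) := by
      intro t ht
      have h1 : |t - s₀| < R := by
        rw [abs_lt]; constructor
        · have := ht.1; linarith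
        · have := ht.2; linarith
      have h2 : ContinuousAt g (t:ℂ) :=
        (hderiv (c γ) (t:ℂ) (hmemD γ hγR (t:ℂ) (Metric.mem_ball.mp (hmemball t h1))).1
          ).differentiableAt.continuousAt
      exact (Complex.continuous_re.continuousAt.comp
        (h2.comp Complex.continuous_ofReal.continuousAt)).continuousWithinAt
    have hb1 : |(s₀ + R/16) - s₀| < R := by simpa using hR16
    have hb2 : |(s₀ - R/16) - s₀| < R := by
      rw [show (s₀ - R/16) - s₀ = -(R/16) by ring, abs_neg]; exact hR16
    have hs₀R : |s₀ - s₀| < R := by simpa using hRpos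
    have hup : lam < f (s₀ + R/16) := by
      have := hmono s₀ (s₀ + R/16) hs₀R hb1 (by linarith)
      have h5 := (abs_lt.mp hμs₀).1
      have h6 : 3*a/4 * ((s₀ + R/16) - s₀) = e := by rw [he, haa]; ring
      rw [h6] at this
      linarith
    have hlo : f (s₀ - R/16) < lam := by
      have := hmono (s₀ - R/16) s₀ hb2 hs₀R (by linarith)
      have h5 := (abs_lt.mp hμs₀).2
      have h6 : 3*a/4 * (s₀ - (s₀ - R/16)) = e := by rw [he, haa]; ring
      rw [h6] at this
      linarith
    obtain ⟨t, ht, hft⟩ := intermediate_value_Ioo (by linarith : s₀ - R/16 ≤ s₀ + R/16)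
      hfc (Set.mem_Ioo.mpr ⟨hlo, hup⟩)
    have htR16 : |t - s₀| < R/16 := by
      rw [abs_lt]; exact ⟨by linarith [ht.1], by linarith [ht.2]⟩
    have htR : |t - s₀| < R := by linarith [abs_nonneg (t - s₀)]
    have hgt : g (t:ℂ) = (lam : ℂ) := by rw [hrealt t htR, hft]
    have htV : (c γ, (t:ℂ)) ∈ V := (hmemD γ hγR (t:ℂ) (Metric.mem_ball.mp (hmemball t htR))).1
    -- local inverse via strict derivative
    have hga : AnalyticAt ℂ g (t:ℂ) := by
      have h1 : AnalyticAt ℂ (fun z : ℂ => ((c γ, z) : (Fin m → ℂ) × ℂ)) (t:ℂ) :=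
        (analyticAt_const).prod (analyticAt_id)
      exact (hμan _ htV).comp h1
    have hsd : HasStrictDerivAt g (h (c γ, (t:ℂ))) (t:ℂ) := by
      have h1 : HasStrictDerivAt g (deriv g (t:ℂ)) (t:ℂ) :=
        (hga.contDiffAt (n := 1)).hasStrictDerivAt one_ne_zero
      rwa [(hderiv (c γ) (t:ℂ) htV).deriv] at h1
    have hne : h (c γ, (t:ℂ)) ≠ 0 := by
      intro h0
      have := (hmemD γ hγR (t:ℂ) (Metric.mem_ball.mp (hmemball t htR))).2
      rw [h0] at this
      rw [zero_sub, norm_neg, Complex.norm_real, Real.norm_eq_abs] at this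
      linarith
    have hmap := hsd.map_nhds_eq hne
    have himg : g '' (Metric.ball (t:ℂ) (R/8)) ∈ nhds ((lam : ℂ)) := by
      rw [← hgt, ← hmap]
      exact Filter.image_mem_map (Metric.ball_mem_nhds _ (by positivity))
    obtain ⟨ε₁, hε₁, hsub⟩ := Metric.mem_nhds_iff.mp himg
    refine ⟨ε₁, hε₁, ?_⟩
    intro ε hε hεlt
    have hmemb : (lam : ℂ) + Complex.I * (ε:ℂ) ∈ Metric.ball ((lam:ℂ)) ε₁ := by
      rw [Metric.mem_ball, Complex.dist_eq]
      have : (lam : ℂ) + Complex.I * (ε:ℂ) - (lam:ℂ) = Complex.I * (ε:ℂ) := by ring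
      rw [this, norm_mul, Complex.norm_I, Complex.norm_real, Real.norm_eq_abs, one_mul, abs_of_pos hε]
      exact hεlt
    obtain ⟨s, hsball, hgs⟩ := hsub hmemb
    have hst : ‖s - (t:ℂ)‖ < R/8 := by
      have := Metric.mem_ball.mp hsball
      rwa [Complex.dist_eq] at this
    have hsre : s.re ∈ Ioo (s₀ - δ₀) (s₀ + δ₀) := by
      have h1 : |s.re - t| ≤ ‖s - (t:ℂ)‖ := by
        have := Complex.abs_re_le_norm (s - (t:ℂ))
        simpa using this
      have h2 : |s.re - s₀| < R/4 := by
        calc |s.re - s₀| ≤ |s.re - t| + |t - s₀| := abs_sub_le _ _ _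
          _ < R/8 + R/16 := add_lt_add (lt_of_le_of_lt h1 hst) htR16
          _ ≤ R/4 := by linarith
      rw [hδ₀]
      exact ⟨by linarith [(abs_lt.mp h2).1], by linarith [(abs_lt.mp h2).2]⟩
    have hsimabs : |s.im| < R/8 := by
      have h1 : |s.im - 0| ≤ ‖s - (t:ℂ)‖ := by
        have := Complex.abs_im_le_norm (s - (t:ℂ))
        simpa using this
      simpa using lt_of_le_of_lt h1 hst
    have hsballR : s ∈ Metric.ball (s₀:ℂ) R := by
      rw [Metric.mem_ball]
      calc dist s (s₀:ℂ) ≤ dist s (t:ℂ) + dist (t:ℂ) (s₀:ℂ) := dist_triangle _ _ _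
        _ < R/8 + R/16 := by
            apply add_lt_add
            · rwa [Complex.dist_eq]
            · rw [Complex.dist_eq, ← Complex.ofReal_sub, Complex.norm_real, Real.norm_eq_abs]; exact htR16
        _ < R := by linarith
    have hμsim : (μ (c γ, s)).im = ε := by
      rw [show μ (c γ, s) = g s from rfl, hgs]
      simp
    have hsimpos : 0 < s.im := by
      by_contra hcon
      push_neg at hcon
      have h1 := hIm γ hγR s hsballR
      rw [hμsim, haa] at h1
      have h2 : |s.im| = -s.im := abs_of_nonpos hcon
      rw [h2] at h1
      have h3 := (abs_le.mp h1).2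
      nlinarith
    have hsimlt : s.im < δ₀ := by
      have h1 := le_abs_self s.im
      rw [hδ₀]; linarith
    refine ⟨s, ⟨hsre, ⟨hsimpos, hsimlt⟩, hgs⟩, ?_⟩
    · intro s' ⟨hre', him', heq'⟩
      have hs'ball : s' ∈ Metric.ball (s₀:ℂ) R := Metric.mem_ball.mpr (hbox s' hre' him')
      have h1 := hinj γ hγR s' hs'ball s hsballR
      have heq2 : μ (c γ, s') = (lam : ℂ) + Complex.I * (ε : ℂ) := heq'
      have hgs2 : μ (c γ, s) = (lam : ℂ) + Complex.I * (ε : ℂ) := hgs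
      rw [heq2, hgs2, sub_self, norm_zero] at h1
      have h2 : ‖s' - s‖ = 0 := by nlinarith [norm_nonneg (s' - s)]
      exact sub_eq_zero.mp (norm_eq_zero.mp h2)
  · -- (iii)
    intro haneg γ hγ
    have hγR : ‖γ - γ₀‖ < R := lt_of_lt_of_le hγ hr₀R
    refine ⟨1, one_pos, ?_⟩
    intro ε hε _ ⟨s, hre, him, heq⟩
    have hsball : s ∈ Metric.ball (s₀:ℂ) R := Metric.mem_ball.mpr (hbox s hre him)
    have h1 := hIm γ hγR s hsball
    have hμsim : (μ (c γ, s)).im = ε := by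
      have heq2 : μ (c γ, s) = (lam : ℂ) + Complex.I * (ε : ℂ) := heq
      rw [heq2]; simp
    rw [hμsim] at h1
    have h2 : |s.im| = s.im := abs_of_pos him.1
    rw [h2, abs_of_neg haneg] at h1
    have h3 := (abs_le.mp h1).2
    have h4 : 0 < (-a) * s.im := mul_pos (neg_pos.mpr haneg) him.1
    linarith
end

section
/- Let f : ℂ → ℂ be analytic on an open neighborhood of a real point s₀, real-valued on the real points of this neighborhood, and set λ := f(s₀) ∈ ℝ. Assume f′(s₀) = 0 and f″(s₀) ≠ 0. Then there exists δ₀ > 0 such that for every sufficiently small ε > 0 the equation f(s) = λ + iε has exactly two solutions s in the open disk |s − s₀| < δ₀; both are simple zeros of f − (λ + iε), neither solution is real, and exactly one of them has positive imaginary part while the other has negative imaginary part. -/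
open Set Complex Filter Function

/-- Every complex number has a square root. -/
lemma aux_exists_sq (c : ℂ) : ∃ u : ℂ, u ^ 2 = c := by
  refine ⟨c ^ (2:ℂ)⁻¹, ?_⟩
  rw [← Complex.cpow_natCast (c ^ (2:ℂ)⁻¹) 2, ← Complex.cpow_mul]
  · norm_num
  · have h1 := Complex.neg_pi_lt_log_im c
    have h2 := Complex.log_im_le_pi c
    simp only [Complex.mul_im, Complex.inv_im, Complex.inv_re]
    norm_num
    nlinarith [Real.pi_pos]
  · have h1 := Complex.neg_pi_lt_log_im c
    have h2 := Complex.log_im_le_pi c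
    simp only [Complex.mul_im, Complex.inv_im, Complex.inv_re]
    norm_num
    nlinarith [Real.pi_pos]

/-- If `h` is differentiable at a real point and real-valued on nearby real points,
its derivative at that point has zero imaginary part. -/
lemma aux_deriv_real {h : ℂ → ℂ} {t : ℝ} (hdiff : DifferentiableAt ℂ h ↑t)
    (him : ∀ᶠ u : ℝ in nhds t, (h ↑u).im = 0) : (deriv h ↑t).im = 0 := by
  have H1 : HasDerivAt (fun u : ℝ => h ↑u) (deriv h ↑t) t :=
    (hdiff.hasDerivAt).comp_ofReal
  have H2 : HasDerivAt (fun u : ℝ => (h ↑u).im) ((deriv h ↑t).im) t := by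
    simpa [Function.comp_def] using (Complex.imCLM.hasFDerivAt.comp_hasDerivAt t H1)
  have H3 : HasDerivAt (fun u : ℝ => (h ↑u).im) 0 t := by
    refine (hasDerivAt_const t (0:ℝ)).congr_of_eventuallyEq ?_
    filter_upwards [him] with u hu using hu
  exact H2.unique H3

/-- Let `f : ℂ → ℂ` be analytic on an open neighborhood of a real
point `s₀`, real-valued on real points of this neighborhood, `λ := f(s₀) ∈ ℝ`,
`f'(s₀) = 0` and `f''(s₀) ≠ 0`.  Then there is `δ₀ > 0` such that for all
sufficiently small `ε > 0` the equation `f(s) = λ + iε` has exactly two solutions in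
the disk `|s - s₀| < δ₀`; both are simple zeros of `f - (λ + iε)`, neither is real,
and exactly one has positive imaginary part while the other has negative imaginary
part. -/
theorem degenerate_double_root_splitting
    (f : ℂ → ℂ) (s₀ : ℝ) (lam : ℝ)
    (V : Set ℂ) (hV : IsOpen V) (hmem : (s₀ : ℂ) ∈ V)
    (hfan : AnalyticOnNhd ℂ f V)
    (hreal : ∀ t : ℝ, (t : ℂ) ∈ V → (f (t : ℂ)).im = 0)
    (hval : f (s₀ : ℂ) = (lam : ℂ))
    (hd1 : deriv f (s₀ : ℂ) = 0)
    (hd2 : iteratedDeriv 2 f (s₀ : ℂ) ≠ 0) :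
    ∃ δ₀ > (0 : ℝ), ∃ ε₁ > (0 : ℝ), ∀ ε : ℝ, 0 < ε → ε < ε₁ →
      ∃ z₁ z₂ : ℂ, z₁ ≠ z₂ ∧
        {s : ℂ | ‖s - (s₀ : ℂ)‖ < δ₀ ∧ f s = (lam : ℂ) + Complex.I * (ε : ℂ)}
          = {z₁, z₂} ∧
        deriv f z₁ ≠ 0 ∧ deriv f z₂ ≠ 0 ∧
        z₁.im ≠ 0 ∧ z₂.im ≠ 0 ∧
        0 < z₁.im ∧ z₂.im < 0 := by
  ------------------------------------------------------------------
  -- Step 1: the second derivative at `s₀` is real.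
  ------------------------------------------------------------------
  have hVnear : ∀ t : ℝ, (t:ℂ) ∈ V → ∀ᶠ u : ℝ in nhds t, (u:ℂ) ∈ V := fun t ht =>
    Complex.continuous_ofReal.continuousAt.preimage_mem_nhds (hV.mem_nhds ht)
  have hderiv_real : ∀ t : ℝ, (t:ℂ) ∈ V → (deriv f ↑t).im = 0 := by
    intro t ht
    refine aux_deriv_real ((hfan _ ht).differentiableAt) ?_
    filter_upwards [hVnear t ht] with u hu using hreal u hu
  have him2 : (iteratedDeriv 2 f ↑s₀).im = 0 := by
    have h2 : iteratedDeriv 2 f = deriv (deriv f) := by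
      rw [iteratedDeriv_succ, iteratedDeriv_one]
    rw [h2]
    refine aux_deriv_real ((hfan.deriv _ hmem).differentiableAt) ?_
    filter_upwards [hVnear s₀ hmem] with u hu using hderiv_real u hu
  ------------------------------------------------------------------
  -- Step 2: factor `f - lam = (z - s₀)^2 * G`, `G` analytic at `s₀`, `G s₀ ≠ 0`.
  ------------------------------------------------------------------
  set F : ℂ → ℂ := fun s => f s - lam with hFdef
  have hFan : AnalyticAt ℂ F (s₀ : ℂ) := ((hfan _ hmem).sub analyticAt_const)
  obtain ⟨p, hp⟩ := hFan
  set D : ℂ → ℂ := dslope F (s₀ : ℂ) with hDdef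
  set G : ℂ → ℂ := dslope D (s₀ : ℂ) with hGdef
  have hq : HasFPowerSeriesAt D p.fslope (s₀ : ℂ) := hp.has_fpower_series_dslope_fslope
  have hr : HasFPowerSeriesAt G p.fslope.fslope (s₀ : ℂ) := hq.has_fpower_series_dslope_fslope
  have hGan : AnalyticAt ℂ G (s₀ : ℂ) := ⟨_, hr⟩
  have hF0 : F (s₀ : ℂ) = 0 := by simp [hFdef, hval]
  have hD0 : D (s₀ : ℂ) = 0 := by
    rw [hDdef, dslope_same]
    have h3 : deriv F (s₀:ℂ) = deriv f (s₀:ℂ) := by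
      simp only [hFdef]; exact deriv_sub_const _
    rw [h3, hd1]
  have hfac : ∀ z : ℂ, F z = (z - s₀) ^ 2 * G z := by
    intro z
    have h1 : (z - s₀) • D z = F z - F s₀ := sub_smul_dslope F (s₀:ℂ) z
    have h2 : (z - s₀) • G z = D z - D s₀ := sub_smul_dslope D (s₀:ℂ) z
    rw [hF0, sub_zero] at h1
    rw [hD0, sub_zero] at h2
    rw [← h1, ← h2]
    simp only [smul_eq_mul]; ring
  have hGval : G (s₀ : ℂ) = p.coeff 2 := by
    have := hr.coeff_zero 1
    simpa [FormalMultilinearSeries.coeff_fslope] using this.symm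
  have hcoeff : (2 : ℂ) * p.coeff 2 = iteratedDeriv 2 F (s₀ : ℂ) := by
    obtain ⟨rad, hball⟩ := hp
    have h := hball.factorial_smul (1 : ℂ) 2
    rw [iteratedDeriv_eq_iteratedFDeriv]
    rw [← h, show ((p 2 fun _ => (1:ℂ)) = p.coeff 2) from rfl, nsmul_eq_mul]
    norm_num
  have hFit : iteratedDeriv 2 F (s₀ : ℂ) = iteratedDeriv 2 f (s₀ : ℂ) := by
    have h4 : deriv F = deriv f := by
      funext z; exact deriv_sub_const _
    rw [iteratedDeriv_succ, iteratedDeriv_one, h4,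
      iteratedDeriv_succ, iteratedDeriv_one]
  have hG2 : (2 : ℂ) * G (s₀ : ℂ) = iteratedDeriv 2 f (s₀ : ℂ) := by
    rw [hGval, hcoeff, hFit]
  have hGne : G (s₀ : ℂ) ≠ 0 := by
    intro h
    rw [h, mul_zero] at hG2
    exact hd2 hG2.symm
  have hGim : (G (s₀:ℂ)).im = 0 := by
    have h5 : ((2 : ℂ) * G (s₀:ℂ)).im = 0 := by rw [hG2]; exact him2
    simpa using h5
  ------------------------------------------------------------------
  -- Step 3: analytic square root `R` of `G` near `s₀`, and `φ = (z - s₀) * R`.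
  ------------------------------------------------------------------
  obtain ⟨u, hu⟩ := aux_exists_sq (G (s₀:ℂ))
  have hu0 : u ≠ 0 := by
    intro h; apply hGne; rw [← hu, h]; ring
  set R : ℂ → ℂ := fun z => u * Complex.exp (Complex.log (G z / G (s₀:ℂ)) / 2) with hRdef
  have hEv : ∀ᶠ z in nhds (s₀:ℂ), (z ∈ V ∧ AnalyticAt ℂ f z) ∧ AnalyticAt ℂ G z ∧
      G z ≠ 0 ∧ G z / G (s₀:ℂ) ∈ Complex.slitPlane := by
    have e1 : ∀ᶠ z in nhds (s₀:ℂ), z ∈ V := hV.mem_nhds hmem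
    have e2 : ∀ᶠ z in nhds (s₀:ℂ), AnalyticAt ℂ G z := hGan.eventually_analyticAt
    have e3 : ∀ᶠ z in nhds (s₀:ℂ), G z ≠ 0 := hGan.continuousAt.eventually_ne hGne
    have e4 : ∀ᶠ z in nhds (s₀:ℂ), G z / G (s₀:ℂ) ∈ Complex.slitPlane := by
      have hc : ContinuousAt (fun z => G z / G (s₀:ℂ)) (s₀:ℂ) :=
        hGan.continuousAt.div continuousAt_const hGne
      have hmem1 : G (s₀:ℂ) / G (s₀:ℂ) ∈ Complex.slitPlane := by
        rw [div_self hGne]; exact Complex.one_mem_slitPlane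
      exact hc.preimage_mem_nhds (Complex.isOpen_slitPlane.mem_nhds hmem1)
    filter_upwards [e1, e2, e3, e4] with z h1 h2 h3 h4
    exact ⟨⟨h1, hfan _ h1⟩, h2, h3, h4⟩
  obtain ⟨U, hU, hUopen, hUmem⟩ := eventually_nhds_iff.mp hEv
  have hRan : ∀ z ∈ U, AnalyticAt ℂ R z := by
    intro z hz
    obtain ⟨-, h2, -, h4⟩ := hU z hz
    exact analyticAt_const.mul
      ((((h2.div analyticAt_const hGne).clog h4).div analyticAt_const (by norm_num)).cexp)
  have hRsq : ∀ z ∈ U, R z ^ 2 = G z := by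
    intro z hz
    obtain ⟨-, -, h3, -⟩ := hU z hz
    have hne : G z / G (s₀:ℂ) ≠ 0 := div_ne_zero h3 hGne
    have hexp : Complex.exp (Complex.log (G z / G (s₀:ℂ)) / 2) ^ 2 = G z / G (s₀:ℂ) := by
      rw [sq, ← Complex.exp_add, add_halves]
      exact Complex.exp_log hne
    simp only [hRdef, mul_pow, hexp, hu]
    rw [mul_comm, div_mul_cancel₀ _ hGne]
  have hR0 : R (s₀:ℂ) = u := by
    simp [hRdef, div_self hGne, Complex.log_one]
  set φ : ℂ → ℂ := fun z => (z - (s₀:ℂ)) * R z with hφdef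
  have hφan : ∀ z ∈ U, AnalyticAt ℂ φ z := fun z hz =>
    ((analyticAt_id.sub analyticAt_const).mul (hRan z hz))
  have hφsq : ∀ z ∈ U, φ z ^ 2 = F z := by
    intro z hz
    simp only [hφdef, mul_pow, hRsq z hz]
    exact (hfac z).symm
  have hφ0 : φ (s₀:ℂ) = 0 := by simp [hφdef]
  have hφd : HasDerivAt φ u (s₀:ℂ) := by
    have hRd : HasDerivAt R (deriv R (s₀:ℂ)) (s₀:ℂ) :=
      ((hRan _ hUmem).differentiableAt).hasDerivAt
    have h6 := ((hasDerivAt_id (s₀:ℂ)).sub_const (s₀:ℂ)).mul hRd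
    exact h6.congr_deriv (by simp [hR0])
  have hφstrict : HasStrictDerivAt φ u (s₀:ℂ) := by
    have h7 := (hφan _ hUmem).hasStrictFDerivAt.hasStrictDerivAt
    rwa [fderiv_apply_one_eq_deriv, hφd.deriv] at h7
  ------------------------------------------------------------------
  -- Step 4: local inverse of `φ`.
  ------------------------------------------------------------------
  set Φ := (hφstrict.hasStrictFDerivAt_equiv hu0).toOpenPartialHomeomorph φ with hΦdef
  have hΦcoe : (Φ : ℂ → ℂ) = φ :=
    (hφstrict.hasStrictFDerivAt_equiv hu0).toOpenPartialHomeomorph_coe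
  have hΦsource : (s₀:ℂ) ∈ Φ.source :=
    (hφstrict.hasStrictFDerivAt_equiv hu0).mem_toOpenPartialHomeomorph_source
  have hψstrict : HasStrictDerivAt Φ.symm u⁻¹ (0:ℂ) := by
    have h := hφstrict.to_localInverse (hf' := hu0)
    have hdef : hφstrict.localInverse φ u (s₀:ℂ) hu0 = Φ.symm :=
      (hφstrict.hasStrictFDerivAt_equiv hu0).localInverse_def
    rw [hdef, hφ0] at h
    exact h
  have hψ0 : Φ.symm 0 = (s₀:ℂ) := by
    have h8 := Φ.left_inv hΦsource
    rw [show Φ (s₀:ℂ) = φ (s₀:ℂ) from congrFun hΦcoe _, hφ0] at h8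
    exact h8
  set a : ℂ := u⁻¹ with hadef
  have ha0 : a ≠ 0 := inv_ne_zero hu0
  have haim : (a * a).im = 0 := by
    have : a * a = (G (s₀:ℂ))⁻¹ := by
      rw [hadef, ← mul_inv, ← sq, hu]
    rw [this, Complex.inv_im]
    rw [hGim]
    simp
  have hprod : a.re * a.im = 0 := by
    have := haim
    rw [Complex.mul_im] at this
    linarith
  set S : ℝ := a.re + a.im with hSdef
  have hSnorm : |S| = ‖a‖ := by
    have hsq : S^2 = ‖a‖^2 := by
      rw [hSdef, Complex.sq_norm, Complex.normSq_apply]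
      nlinarith [hprod]
    calc |S| = Real.sqrt (S^2) := (Real.sqrt_sq_eq_abs S).symm
      _ = Real.sqrt (‖a‖^2) := by rw [hsq]
      _ = ‖a‖ := Real.sqrt_sq (norm_nonneg a)
  have hS0 : S ≠ 0 := by
    intro h
    rw [h] at hSnorm
    simp at hSnorm
    exact ha0 (norm_eq_zero.mp hSnorm.symm)
  have han : 0 < ‖a‖ := norm_pos_iff.mpr ha0
  ------------------------------------------------------------------
  -- Step 5: little-o bound for the local inverse.
  ------------------------------------------------------------------
  have hlito := hasDerivAt_iff_isLittleO.mp hψstrict.hasDerivAt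
  have hbound := Asymptotics.isLittleO_iff.mp hlito (show (0:ℝ) < ‖a‖/2 by positivity)
  rw [Metric.eventually_nhds_iff] at hbound
  obtain ⟨ρ, hρ0, hρ⟩ := hbound
  ------------------------------------------------------------------
  -- Step 6: choice of δ₀ and the image radius.
  ------------------------------------------------------------------
  have hEvB : ∀ᶠ z in nhds (s₀:ℂ), z ∈ U ∧ z ∈ Φ.source ∧ deriv φ z ≠ 0 := by
    have e1 := hUopen.mem_nhds hUmem
    have e2 := Φ.open_source.mem_nhds hΦsource
    have e3 : ∀ᶠ z in nhds (s₀:ℂ), deriv φ z ≠ 0 := by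
      have hφU : AnalyticOnNhd ℂ φ U := fun z hz => hφan z hz
      have hcont : ContinuousAt (deriv φ) (s₀:ℂ) := ((hφU.deriv _ hUmem).continuousAt)
      exact hcont.eventually_ne (by rw [hφd.deriv]; exact hu0)
    filter_upwards [e1, e2, e3] with z h1 h2 h3
    exact ⟨h1, h2, h3⟩
  rw [Metric.eventually_nhds_iff_ball] at hEvB
  obtain ⟨δ₀, hδ₀, hB⟩ := hEvB
  have hBsub : Metric.ball (s₀:ℂ) δ₀ ⊆ Φ.source := fun z hz => (hB z hz).2.1
  have hBU : Metric.ball (s₀:ℂ) δ₀ ⊆ U := fun z hz => (hB z hz).1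
  have hTopen : IsOpen (φ '' Metric.ball (s₀:ℂ) δ₀) := by
    have h9 := Φ.isOpen_image_of_subset_source Metric.isOpen_ball hBsub
    rwa [hΦcoe] at h9
  have hT0 : (0:ℂ) ∈ φ '' Metric.ball (s₀:ℂ) δ₀ :=
    ⟨(s₀:ℂ), Metric.mem_ball_self hδ₀, hφ0⟩
  obtain ⟨rr, hrr0, hrr⟩ := Metric.isOpen_iff.mp hTopen 0 hT0
  set r' := min rr ρ with hr'def
  have hr'0 : 0 < r' := lt_min hrr0 hρ0
  -- the derivative of f on the ball
  have hderivf : ∀ z ∈ Metric.ball (s₀:ℂ) δ₀, deriv f z = 2 * φ z * deriv φ z := by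
    intro z hz
    have hzU : z ∈ U := hBU hz
    have hfeq : f =ᶠ[nhds z] fun y => (lam:ℂ) + φ y ^ 2 := by
      filter_upwards [Metric.isOpen_ball.mem_nhds hz] with y hy
      have h10 := hφsq y (hBU hy)
      simp only [hFdef] at h10
      rw [h10]; ring
    rw [hfeq.deriv_eq]
    have hdz : HasDerivAt φ (deriv φ z) z := ((hφan z hzU).differentiableAt).hasDerivAt
    have h11 := (hdz.pow 2).const_add (lam:ℂ)
    rw [(show HasDerivAt (fun y => (lam:ℂ) + φ y ^ 2) (((2:ℕ):ℂ) * φ z ^ (2 - 1) * deriv φ z) z from h11).deriv]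
    ring
  ------------------------------------------------------------------
  -- Step 7: the main construction for each small ε.
  ------------------------------------------------------------------
  refine ⟨δ₀, hδ₀, r'^2, by positivity, ?_⟩
  intro ε hε0 hεlt
  set t := Real.sqrt (ε/2) with htdef
  have ht0 : 0 < t := Real.sqrt_pos.mpr (by linarith)
  set c : ℂ := (t:ℂ) * (1 + Complex.I) with hcdef
  have hc2 : c ^ 2 = Complex.I * (ε:ℂ) := by
    have h1 : ((t:ℂ))^2 = ((ε/2 : ℝ):ℂ) := by
      rw [← Complex.ofReal_pow]
      norm_cast
      exact Real.sq_sqrt (by linarith)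
    rw [hcdef, mul_pow, h1]
    have h2 : ((1:ℂ) + Complex.I)^2 = 2 * Complex.I := by
      rw [add_sq, Complex.I_sq]; ring
    rw [h2]
    push_cast; ring
  have hc0 : c ≠ 0 := by
    rw [hcdef]
    apply mul_ne_zero
    · exact_mod_cast ht0.ne'
    · intro h
      have := congrArg Complex.im h
      simp at this
  have hnc : ‖c‖ = t * Real.sqrt 2 := by
    rw [hcdef, norm_mul]
    have h1 : ‖((t:ℂ))‖ = t := by
      rw [Complex.norm_real]; exact abs_of_pos ht0
    have h2 : ‖(1:ℂ) + Complex.I‖ = Real.sqrt 2 := by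
      rw [← Real.sqrt_sq (norm_nonneg _), Complex.sq_norm, Complex.normSq_apply]
      norm_num
    rw [h1, h2]
  have hncε : ‖c‖ = Real.sqrt ε := by
    rw [hnc, htdef, ← Real.sqrt_mul (by linarith)]
    norm_num
  have hcr : ‖c‖ < r' := by
    rw [hncε]
    calc Real.sqrt ε < Real.sqrt (r'^2) := Real.sqrt_lt_sqrt hε0.le hεlt
      _ = r' := Real.sqrt_sq hr'0.le
  -- solutions
  have hmemT : ∀ w : ℂ, ‖w‖ < r' → w ∈ φ '' Metric.ball (s₀:ℂ) δ₀ := by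
    intro w hw
    apply hrr
    rw [Metric.mem_ball, dist_zero_right]
    exact lt_of_lt_of_le hw (min_le_left _ _)
  obtain ⟨p₁, hp₁B, hφp₁⟩ := hmemT c hcr
  obtain ⟨p₂, hp₂B, hφp₂⟩ := hmemT (-c) (by rwa [norm_neg])
  have hψval : ∀ w z, z ∈ Metric.ball (s₀:ℂ) δ₀ → φ z = w → Φ.symm w = z := by
    intro w z hz hφz
    rw [← hφz, ← congrFun hΦcoe z]
    exact Φ.left_inv (hBsub hz)
  -- imaginary part bounds
  have hbnd : ∀ w : ℂ, ‖w‖ < r' → |(Φ.symm w).im - (w * a).im| ≤ ‖a‖/2 * ‖w‖ := by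
    intro w hw
    have h := hρ (show dist w 0 < ρ by
      rw [dist_zero_right]; exact lt_of_lt_of_le hw (min_le_right _ _))
    rw [hψ0, sub_zero, smul_eq_mul] at h
    calc |(Φ.symm w).im - (w*a).im| = |(Φ.symm w - (s₀:ℂ) - w*a).im| := by
          simp [Complex.sub_im, Complex.ofReal_im]
      _ ≤ ‖Φ.symm w - (s₀:ℂ) - w*a‖ := Complex.abs_im_le_norm _
      _ ≤ ‖a‖/2 * ‖w‖ := by simpa using h
  have hIm_c : (c * a).im = t * S := by
    simp only [hcdef, hSdef, Complex.mul_im, Complex.mul_re, Complex.ofReal_re,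
      Complex.ofReal_im, Complex.add_re, Complex.add_im, Complex.one_re, Complex.one_im,
      Complex.I_re, Complex.I_im]
    ring
  have hkey : ‖a‖/2 * ‖c‖ < t * |S| := by
    rw [hSnorm, hnc]
    have h2 : Real.sqrt 2 < 2 := by
      nlinarith [Real.sq_sqrt (by norm_num : (0:ℝ) ≤ 2), Real.sqrt_nonneg 2]
    nlinarith [mul_pos ht0 han]
  have hIm_p₁ : |p₁.im - t * S| ≤ ‖a‖/2 * ‖c‖ := by
    have := hbnd c hcr
    rw [hψval c p₁ hp₁B hφp₁, hIm_c] at this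
    exact this
  have hIm_p₂ : |p₂.im + t * S| ≤ ‖a‖/2 * ‖c‖ := by
    have h := hbnd (-c) (by rwa [norm_neg])
    rw [hψval (-c) p₂ hp₂B hφp₂] at h
    have h2 : ((-c) * a).im = -(t * S) := by rw [neg_mul, Complex.neg_im, hIm_c]
    rw [h2, norm_neg] at h
    simpa [sub_neg_eq_add] using h
  -- distinctness
  have hp₁₂ : p₁ ≠ p₂ := by
    intro h
    rw [h, hφp₂] at hφp₁
    apply hc0
    have : (2:ℂ) * c = 0 := by linear_combination -hφp₁
    simpa using this
  -- the set of solutions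
  have hset : {s : ℂ | ‖s - (s₀ : ℂ)‖ < δ₀ ∧ f s = (lam : ℂ) + Complex.I * (ε : ℂ)}
      = {p₁, p₂} := by
    ext s
    simp only [mem_setOf_eq, mem_insert_iff, mem_singleton_iff]
    constructor
    · rintro ⟨hs1, hs2⟩
      have hsB : s ∈ Metric.ball (s₀:ℂ) δ₀ := by
        rw [Metric.mem_ball, dist_eq_norm]; exact hs1
      have hφs : φ s ^ 2 = c ^ 2 := by
        rw [hc2]
        have h := hφsq s (hBU hsB)
        simp only [hFdef] at h
        rw [h, hs2]; ring
      have hsplit : (φ s - c) * (φ s + c) = 0 := by linear_combination hφs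
      have hinj : ∀ z, z ∈ Metric.ball (s₀:ℂ) δ₀ → φ s = φ z → s = z := by
        intro z hz he
        apply Φ.injOn (hBsub hsB) (hBsub hz)
        rw [congrFun hΦcoe s, congrFun hΦcoe z]
        exact he
      rcases mul_eq_zero.mp hsplit with h | h
      · left
        exact hinj p₁ hp₁B (by rw [hφp₁]; exact sub_eq_zero.mp h)
      · right
        refine hinj p₂ hp₂B ?_
        rw [hφp₂]
        have : φ s = -c := by linear_combination h
        exact this
    · have hfval : ∀ z, z ∈ Metric.ball (s₀:ℂ) δ₀ → φ z ^ 2 = Complex.I * ε →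
          ‖z - (s₀:ℂ)‖ < δ₀ ∧ f z = (lam : ℂ) + Complex.I * (ε : ℂ) := by
        intro z hz hsq
        constructor
        · rw [← dist_eq_norm]; exact hz
        · have h := hφsq z (hBU hz)
          simp only [hFdef] at h
          rw [← hsq, h]; ring
      rintro (rfl | rfl)
      · exact hfval _ hp₁B (by rw [hφp₁, hc2])
      · exact hfval _ hp₂B (by rw [hφp₂]; rw [neg_pow]; simp [hc2])
  -- nonvanishing derivative at the two roots
  have hder₁ : deriv f p₁ ≠ 0 := by
    rw [hderivf p₁ hp₁B, hφp₁]
    exact mul_ne_zero (mul_ne_zero two_ne_zero hc0) (hB p₁ hp₁B).2.2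
  have hder₂ : deriv f p₂ ≠ 0 := by
    rw [hderivf p₂ hp₂B, hφp₂]
    exact mul_ne_zero (mul_ne_zero two_ne_zero (neg_ne_zero.mpr hc0)) (hB p₂ hp₂B).2.2
  ------------------------------------------------------------------
  -- Step 8: signs of the imaginary parts; final assembly.
  ------------------------------------------------------------------
  have habs₁ : |p₁.im - t * S| < t * |S| := lt_of_le_of_lt hIm_p₁ hkey
  have habs₂ : |p₂.im + t * S| < t * |S| := lt_of_le_of_lt hIm_p₂ hkey
  have hlt₁ := abs_lt.mp habs₁
  have hlt₂ := abs_lt.mp habs₂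
  rcases lt_or_gt_of_ne hS0 with hSneg | hSpos
  · -- S < 0 : p₁ has negative imaginary part, p₂ positive
    rw [abs_of_neg hSneg] at hlt₁ hlt₂
    have h1 : p₁.im < 0 := by linarith [hlt₁.2]
    have h2 : 0 < p₂.im := by linarith [hlt₂.1]
    exact ⟨p₂, p₁, hp₁₂.symm, by rw [hset, Set.pair_comm], hder₂, hder₁,
      h2.ne', h1.ne, h2, h1⟩
  · -- S > 0
    rw [abs_of_pos hSpos] at hlt₁ hlt₂
    have h1 : 0 < p₁.im := by linarith [hlt₁.1]
    have h2 : p₂.im < 0 := by linarith [hlt₂.2]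
    exact ⟨p₁, p₂, hp₁₂, hset, hder₁, hder₂, h1.ne', h2.ne, h1, h2⟩
end

section
/- Let ℓ₁ < ℓ₂ be real numbers, δ > 0, and let f be analytic on an open set containing the closed rectangle {x + iy ∈ ℂ : ℓ₁ ≤ x ≤ ℓ₂, 0 ≤ y ≤ δ}. Assume f(ℓ₁ + iτ) = f(ℓ₂ + iτ) for all τ ∈ [0, δ] (periodicity in the real direction), and let σ : [ℓ₁, ℓ₂] → [0, δ] be continuously differentiable with σ(ℓ₁) = σ(ℓ₂). Then ∫_{ℓ₁}^{ℓ₂} f(t) dt = ∫_{ℓ₁}^{ℓ₂} f(t + iσ(t)) · (1 + iσ′(t)) dt. -/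
open Set Complex intervalIntegral
section helpers
open MeasureTheory

-- helpers
lemma uIoc_abs_le {p q t : ℝ} (h : t ∈ Set.uIoc p q) : |t - p| ≤ |q - p| := by
  rcases le_total p q with hpq | hpq
  · rw [Set.uIoc_of_le hpq] at h
    rw [_root_.abs_of_nonneg (by linarith [h.1.le]), _root_.abs_of_nonneg (by linarith)]
    linarith [h.2]
  · rw [Set.uIoc_comm, Set.uIoc_of_le hpq] at h
    rw [_root_.abs_of_nonpos (by linarith [h.2]), _root_.abs_of_nonpos (by linarith)]
    linarith [h.1.le]

lemma clamp_abs {p q η u : ℝ} (hpq : p ≤ q) (hη : 0 ≤ η) (h1 : p - η ≤ u) (h2 : u ≤ q + η) :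
    |u - min (max u p) q| ≤ η := by
  rcases le_total u p with h | h
  · rw [max_eq_right h, min_eq_left hpq, _root_.abs_of_nonpos (by linarith)]; linarith
  · rw [max_eq_left h]
    rcases le_total u q with h' | h'
    · rw [min_eq_left h', sub_self, abs_zero]; exact hη
    · rw [min_eq_right h', _root_.abs_of_nonneg (by linarith)]; linarith

/-- Primitive of a holomorphic function on an open rectangle. -/
lemma exists_primitive_rect {a b c d : ℝ} (f : ℂ → ℂ)
    (hf : DifferentiableOn ℂ f (Icc a b ×ℂ Icc c d)) :
    ∃ F : ℂ → ℂ, ∀ z ∈ Ioo a b ×ℂ Ioo c d, HasDerivAt F (f z) z := by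
  set R : Set ℂ := Icc a b ×ℂ Icc c d with hR
  set V : Set ℂ := Ioo a b ×ℂ Ioo c d with hV
  have hVR : V ⊆ R := by
    intro z hz; exact ⟨Ioo_subset_Icc_self hz.1, Ioo_subset_Icc_self hz.2⟩
  have hVopen : IsOpen V := isOpen_Ioo.reProdIm isOpen_Ioo
  have hc : ContinuousOn f R := hf.continuousOn
  -- integrability on vertical and horizontal segments
  have hver : ∀ x ∈ Icc a b, ∀ y₁ ∈ Icc c d, ∀ y₂ ∈ Icc c d,
      IntervalIntegrable (fun τ : ℝ => f (x + τ * I)) volume y₁ y₂ := by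
    intro x hx y₁ hy₁ y₂ hy₂
    apply ContinuousOn.intervalIntegrable
    apply hc.comp (by fun_prop)
    intro τ hτ
    refine ⟨by simpa using hx, by simpa using Set.uIcc_subset_Icc hy₁ hy₂ hτ⟩
  have hhor : ∀ y ∈ Icc c d, ∀ x₁ ∈ Icc a b, ∀ x₂ ∈ Icc a b,
      IntervalIntegrable (fun t : ℝ => f (t + y * I)) volume x₁ x₂ := by
    intro y hy x₁ hx₁ x₂ hx₂
    apply ContinuousOn.intervalIntegrable
    apply hc.comp (by fun_prop)
    intro t ht
    refine ⟨by simpa using Set.uIcc_subset_Icc hx₁ hx₂ ht, by simpa using hy⟩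
  set F : ℂ → ℂ := fun z =>
    (∫ t in a..z.re, f (t + c * I)) + I • ∫ τ in c..z.im, f (z.re + τ * I) with hF
  refine ⟨F, ?_⟩
  -- the key rectangle identity
  have hkey : ∀ z ∈ R, ∀ w ∈ R, F w - F z =
      (∫ t in z.re..w.re, f (t + z.im * I)) + I • ∫ τ in z.im..w.im, f (w.re + τ * I) := by
    intro z hz w hw
    obtain ⟨hzre, hzim⟩ := hz
    obtain ⟨hwre, hwim⟩ := hw
    simp only [mem_preimage, mem_Icc] at hzre hzim hwre hwim
    have hcd : c ≤ d := hzim.1.trans hzim.2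
    have hab' : a ≤ b := hzre.1.trans hzre.2
    have hcmem : c ∈ Icc c d := ⟨le_refl c, hcd⟩
    have hamem : a ∈ Icc a b := ⟨le_refl a, hab'⟩
    have hsub : (Set.uIcc z.re w.re ×ℂ Set.uIcc c z.im) ⊆ R := by
      intro u hu
      exact ⟨Set.uIcc_subset_Icc ⟨hzre.1, hzre.2⟩ ⟨hwre.1, hwre.2⟩ hu.1,
             Set.uIcc_subset_Icc hcmem ⟨hzim.1, hzim.2⟩ hu.2⟩
    have hG : (∫ x in z.re..w.re, f (x + c * I)) - (∫ x in z.re..w.re, f (x + z.im * I)) +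
        I • (∫ y in c..z.im, f (w.re + y * I)) - I • (∫ y in c..z.im, f (z.re + y * I)) = 0 :=
      Complex.integral_boundary_rect_eq_zero_of_differentiableOn f ⟨z.re, c⟩ ⟨w.re, z.im⟩
        (hf.mono hsub)
    have h1 : (∫ t in a..w.re, f (t + c * I)) - (∫ t in a..z.re, f (t + c * I)) =
        ∫ t in z.re..w.re, f (t + c * I) :=
      intervalIntegral.integral_interval_sub_left
        (hhor c hcmem a hamem w.re ⟨hwre.1, hwre.2⟩) (hhor c hcmem a hamem z.re ⟨hzre.1, hzre.2⟩)
    have h2 : (∫ τ in c..z.im, f (w.re + τ * I)) + (∫ τ in z.im..w.im, f (w.re + τ * I)) =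
        ∫ τ in c..w.im, f (w.re + τ * I) :=
      intervalIntegral.integral_add_adjacent_intervals
        (hver w.re ⟨hwre.1, hwre.2⟩ c hcmem z.im ⟨hzim.1, hzim.2⟩)
        (hver w.re ⟨hwre.1, hwre.2⟩ z.im ⟨hzim.1, hzim.2⟩ w.im ⟨hwim.1, hwim.2⟩)
    simp only [hF, smul_eq_mul] at hG h2 ⊢
    linear_combination h1 + hG - Complex.I * h2
  intro z hz
  have hRz : R ∈ nhds z := Filter.mem_of_superset (hVopen.mem_nhds hz) hVR
  have hzR : z ∈ R := hVR hz
  rw [hasDerivAt_iff_isLittleO, Asymptotics.isLittleO_iff]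
  intro ε hε
  have hfz : ContinuousAt f z := (hf.differentiableAt hRz).continuousAt
  obtain ⟨r1, hr1, hfr1⟩ := Metric.continuousAt_iff.mp hfz (ε / 2) (by positivity)
  obtain ⟨r2, hr2, hr2V⟩ := Metric.isOpen_iff.mp hVopen z hz
  set r : ℝ := min r1 r2 with hrdef
  have hr : 0 < r := lt_min hr1 hr2
  filter_upwards [Metric.ball_mem_nhds z (by positivity : (0:ℝ) < r / 2)] with w hw
  have hwz : dist w z < r / 2 := Metric.mem_ball.mp hw
  have hwznorm : ‖w - z‖ < r / 2 := by rwa [← dist_eq_norm]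
  have hwV : w ∈ V := hr2V (Metric.mem_ball.mpr (lt_of_lt_of_le (by linarith) (min_le_right r1 r2)))
  have hwR : w ∈ R := hVR hwV
  -- the two integration paths stay in the ball of radius r around z
  have hreabs : |w.re - z.re| ≤ ‖w - z‖ := by
    have := Complex.abs_re_le_norm (w - z); simpa [Complex.sub_re] using this
  have himabs : |w.im - z.im| ≤ ‖w - z‖ := by
    have := Complex.abs_im_le_norm (w - z); simpa [Complex.sub_im] using this
  have hzre : z.re ∈ Icc a b := hzR.1
  have hzim : z.im ∈ Icc c d := hzR.2
  have hwre : w.re ∈ Icc a b := hwR.1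
  have hwim : w.im ∈ Icc c d := hwR.2
  have hid := hkey z hzR w hwR
  have hI1 : IntervalIntegrable (fun t : ℝ => f (t + z.im * I)) volume z.re w.re :=
    hhor z.im hzim z.re hzre w.re hwre
  have hI2 : IntervalIntegrable (fun τ : ℝ => f (w.re + τ * I)) volume z.im w.im :=
    hver w.re hwre z.im hzim w.im hwim
  have hwzdecomp : (w - z : ℂ) = ((w.re - z.re : ℝ) : ℂ) + ((w.im - z.im : ℝ) : ℂ) * I := by
    simp [Complex.ext_iff]
  have hsplit : F w - F z - (w - z) • f z =
      (∫ t in z.re..w.re, (f (t + z.im * I) - f z)) +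
        I • ∫ τ in z.im..w.im, (f (w.re + τ * I) - f z) := by
    rw [intervalIntegral.integral_sub hI1 intervalIntegrable_const,
      intervalIntegral.integral_sub hI2 intervalIntegrable_const]
    simp only [intervalIntegral.integral_const, smul_eq_mul]
    simp only [Complex.real_smul, smul_eq_mul]
    rw [hid]
    simp only [smul_eq_mul]
    linear_combination (-(f z)) * hwzdecomp
  rw [hsplit]
  have hb1 : ‖∫ t in z.re..w.re, (f (t + z.im * I) - f z)‖ ≤ (ε / 2) * |w.re - z.re| := by
    apply intervalIntegral.norm_integral_le_of_norm_le_const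
    intro t ht
    have hdist : dist ((t : ℂ) + z.im * I) z < r1 := by
      have h1 : ((t : ℂ) + z.im * I - z) = ((t - z.re : ℝ) : ℂ) := by simp [Complex.ext_iff]
      rw [dist_eq_norm, h1, Complex.norm_real, Real.norm_eq_abs]
      calc |t - z.re| ≤ |w.re - z.re| := uIoc_abs_le ht
        _ ≤ ‖w - z‖ := hreabs
        _ < r / 2 := hwznorm
        _ ≤ r1 := le_trans (by linarith) (min_le_left r1 r2)
    have h := hfr1 hdist
    rw [dist_eq_norm] at h
    exact h.le
  have hb2 : ‖∫ τ in z.im..w.im, (f (w.re + τ * I) - f z)‖ ≤ (ε / 2) * |w.im - z.im| := by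
    apply intervalIntegral.norm_integral_le_of_norm_le_const
    intro τ hτ
    have hdist : dist ((w.re : ℂ) + τ * I) z < r1 := by
      rw [dist_eq_norm]
      have h1 : ((w.re : ℂ) + τ * I - z) = ((w.re - z.re : ℝ) : ℂ) + ((τ - z.im : ℝ) : ℂ) * I := by
        simp [Complex.ext_iff]
      rw [h1]
      calc ‖((w.re - z.re : ℝ) : ℂ) + ((τ - z.im : ℝ) : ℂ) * I‖
          ≤ ‖((w.re - z.re : ℝ) : ℂ)‖ + ‖((τ - z.im : ℝ) : ℂ) * I‖ := norm_add_le _ _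
        _ ≤ |w.re - z.re| + |τ - z.im| := by
            rw [norm_mul, Complex.norm_I, mul_one, Complex.norm_real, Complex.norm_real,
              Real.norm_eq_abs, Real.norm_eq_abs]
        _ ≤ ‖w - z‖ + |w.im - z.im| := by linarith [uIoc_abs_le hτ]
        _ ≤ ‖w - z‖ + ‖w - z‖ := by linarith
        _ < r := by linarith
        _ ≤ r1 := min_le_left r1 r2
    have h := hfr1 hdist
    rw [dist_eq_norm] at h
    exact h.le
  calc ‖(∫ t in z.re..w.re, (f (t + z.im * I) - f z)) +
        I • ∫ τ in z.im..w.im, (f (w.re + τ * I) - f z)‖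
      ≤ ‖∫ t in z.re..w.re, (f (t + z.im * I) - f z)‖ +
        ‖I • ∫ τ in z.im..w.im, (f (w.re + τ * I) - f z)‖ := norm_add_le _ _
    _ ≤ (ε / 2) * |w.re - z.re| + (ε / 2) * |w.im - z.im| := by
        rw [norm_smul, Complex.norm_I, one_mul]; exact add_le_add hb1 hb2
    _ ≤ (ε / 2) * ‖w - z‖ + (ε / 2) * ‖w - z‖ := by
        have := hε.le
        gcongr
    _ = ε * ‖w - z‖ := by ring

end helpers

/-- Contour deformation with periodic cancellation of the vertical
edges: if `f` is analytic on an open set containing the closed rectangle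
`[ℓ₁, ℓ₂] × i[0, δ]`, satisfies `f(ℓ₁ + iτ) = f(ℓ₂ + iτ)` for `τ ∈ [0, δ]`, and
`σ : [ℓ₁, ℓ₂] → [0, δ]` is `C¹` (with derivative `σ'`) and `σ(ℓ₁) = σ(ℓ₂)`, then
`∫_{ℓ₁}^{ℓ₂} f(t) dt = ∫_{ℓ₁}^{ℓ₂} f(t + iσ(t)) (1 + iσ'(t)) dt`. -/
theorem contour_deformation_periodic
    (ℓ₁ ℓ₂ δ : ℝ) (hℓ : ℓ₁ < ℓ₂) (hδ : 0 < δ)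
    (f : ℂ → ℂ)
    (O : Set ℂ) (hO : IsOpen O)
    (hRO : {z : ℂ | z.re ∈ Icc ℓ₁ ℓ₂ ∧ z.im ∈ Icc 0 δ} ⊆ O)
    (hfan : AnalyticOnNhd ℂ f O)
    (hper : ∀ τ ∈ Icc (0 : ℝ) δ,
      f ((ℓ₁ : ℂ) + (τ : ℂ) * Complex.I) = f ((ℓ₂ : ℂ) + (τ : ℂ) * Complex.I))
    (σ σ' : ℝ → ℝ)
    (hσ : ∀ t ∈ Icc ℓ₁ ℓ₂, HasDerivWithinAt σ (σ' t) (Icc ℓ₁ ℓ₂) t)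
    (hσ' : ContinuousOn σ' (Icc ℓ₁ ℓ₂))
    (hσrange : ∀ t ∈ Icc ℓ₁ ℓ₂, σ t ∈ Icc 0 δ)
    (hσends : σ ℓ₁ = σ ℓ₂) :
    (∫ t in ℓ₁..ℓ₂, f (t : ℂ)) =
      ∫ t in ℓ₁..ℓ₂,
        f ((t : ℂ) + (σ t : ℂ) * Complex.I) * (1 + (σ' t : ℂ) * Complex.I) := by
  have hKO : Icc ℓ₁ ℓ₂ ×ℂ Icc 0 δ ⊆ O := hRO
  have hKc : IsCompact (Icc ℓ₁ ℓ₂ ×ℂ Icc 0 δ) :=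
    Metric.isCompact_of_isClosed_isBounded (isClosed_Icc.reProdIm isClosed_Icc)
      (Bornology.IsBounded.reProdIm (Metric.isBounded_Icc ℓ₁ ℓ₂) (Metric.isBounded_Icc 0 δ))
  obtain ⟨ε, hεpos, hεsub⟩ := hKc.exists_thickening_subset_open hO hKO
  set η : ℝ := ε / 3 with hη
  have hηpos : 0 < η := by positivity
  set a : ℝ := ℓ₁ - η with ha
  set b : ℝ := ℓ₂ + η with hb
  set c : ℝ := -η with hc
  set d : ℝ := δ + η with hd
  have hRcl : Icc a b ×ℂ Icc c d ⊆ O := by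
    intro z hz
    apply hεsub
    rw [Metric.mem_thickening_iff]
    have hre : z.re ∈ Icc a b := hz.1
    have him : z.im ∈ Icc c d := hz.2
    refine ⟨⟨min (max z.re ℓ₁) ℓ₂, min (max z.im 0) δ⟩,
      ⟨⟨le_min (le_max_right _ _) hℓ.le, min_le_right _ _⟩,
       ⟨le_min (le_max_right _ _) hδ.le, min_le_right _ _⟩⟩, ?_⟩
    have e1 : |z.re - min (max z.re ℓ₁) ℓ₂| ≤ η :=
      clamp_abs hℓ.le hηpos.le (by simpa [ha] using hre.1) (by simpa [hb] using hre.2)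
    have e2 : |z.im - min (max z.im 0) δ| ≤ η :=
      clamp_abs hδ.le hηpos.le (by simpa [hc] using him.1) (by simpa [hd] using him.2)
    calc dist z ⟨min (max z.re ℓ₁) ℓ₂, min (max z.im 0) δ⟩
        = ‖z - ⟨min (max z.re ℓ₁) ℓ₂, min (max z.im 0) δ⟩‖ := Complex.dist_eq _ _
      _ ≤ |(z - (⟨min (max z.re ℓ₁) ℓ₂, min (max z.im 0) δ⟩ : ℂ)).re| +
          |(z - (⟨min (max z.re ℓ₁) ℓ₂, min (max z.im 0) δ⟩ : ℂ)).im| :=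
            Complex.norm_le_abs_re_add_abs_im _
      _ ≤ η + η := add_le_add e1 e2
      _ < ε := by rw [hη]; linarith
  have hfd : DifferentiableOn ℂ f (Icc a b ×ℂ Icc c d) := fun z hz =>
    ((hfan z (hRcl hz)).differentiableAt).differentiableWithinAt
  obtain ⟨F, hF⟩ := exists_primitive_rect f hfd
  have hV : ∀ z : ℂ, z.re ∈ Icc ℓ₁ ℓ₂ → z.im ∈ Icc 0 δ → z ∈ Ioo a b ×ℂ Ioo c d := by
    intro z h1 h2
    exact ⟨⟨by simp only [ha]; linarith [h1.1], by simp only [hb]; linarith [h1.2]⟩,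
           ⟨by simp only [hc]; linarith [h2.1], by simp only [hd]; linarith [h2.2]⟩⟩
  have hO' : ∀ z : ℂ, z.re ∈ Icc ℓ₁ ℓ₂ → z.im ∈ Icc 0 δ → z ∈ O := fun z h1 h2 =>
    hRO ⟨h1, h2⟩
  set γ : ℝ → ℂ := fun t => (t : ℂ) + (σ t : ℂ) * Complex.I with hγ
  have hγre : ∀ t, (γ t).re = t := by intro t; simp [hγ]
  have hγim : ∀ t, (γ t).im = σ t := by intro t; simp [hγ]
  have hγmem : ∀ t ∈ Icc ℓ₁ ℓ₂, γ t ∈ Ioo a b ×ℂ Ioo c d := fun t ht =>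
    hV _ (by rw [hγre]; exact ht) (by rw [hγim]; exact hσrange t ht)
  have hγO : ∀ t ∈ Icc ℓ₁ ℓ₂, γ t ∈ O := fun t ht =>
    hO' _ (by rw [hγre]; exact ht) (by rw [hγim]; exact hσrange t ht)
  have hbase : ∀ x ∈ Icc ℓ₁ ℓ₂, ((x : ℂ)) ∈ Ioo a b ×ℂ Ioo c d := fun x hx =>
    hV _ (by simpa using hx) (by simp [hδ.le])
  -- Step 1: bottom edge
  have h1 : (∫ t in ℓ₁..ℓ₂, f (t : ℂ)) = F ℓ₂ - F ℓ₁ := by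
    apply intervalIntegral.integral_eq_sub_of_hasDerivAt
    · intro t ht
      rw [Set.uIcc_of_le hℓ.le] at ht
      exact (hF _ (hbase t ht)).comp_ofReal
    · apply ContinuousOn.intervalIntegrable
      intro t ht
      rw [Set.uIcc_of_le hℓ.le] at ht
      have : ((t : ℂ)) ∈ O := hO' _ (by simpa using ht) (by simp [hδ.le])
      exact ((hfan _ this).continuousAt.comp
        Complex.continuous_ofReal.continuousAt).continuousWithinAt
  -- Step 2: deformed path
  have hσcont : ContinuousOn σ (Icc ℓ₁ ℓ₂) := fun t ht => (hσ t ht).continuousWithinAt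
  have hγcont : ContinuousOn γ (Icc ℓ₁ ℓ₂) := by
    apply (Complex.continuous_ofReal.continuousOn).add
    exact (Complex.continuous_ofReal.comp_continuousOn hσcont).mul continuousOn_const
  have hγderiv : ∀ t ∈ Ioo ℓ₁ ℓ₂, HasDerivAt γ (1 + (σ' t : ℂ) * Complex.I) t := by
    intro t ht
    have h := (hσ t (Ioo_subset_Icc_self ht)).hasDerivAt (Icc_mem_nhds ht.1 ht.2)
    have h2 : HasDerivAt (fun u : ℝ => ((σ u : ℂ)) * Complex.I) ((σ' t : ℂ) * Complex.I) t :=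
      (h.ofReal_comp).mul_const Complex.I
    have h3 : HasDerivAt (fun u : ℝ => (u : ℂ)) 1 t := by
      simpa using (hasDerivAt_id t).ofReal_comp
    exact h3.add h2
  have h2 : (∫ t in ℓ₁..ℓ₂, f (γ t) * (1 + (σ' t : ℂ) * Complex.I)) = F (γ ℓ₂) - F (γ ℓ₁) := by
    apply intervalIntegral.integral_eq_sub_of_hasDerivAt_of_le hℓ.le
    · intro t ht
      exact ((hF _ (hγmem t ht)).continuousAt).comp_continuousWithinAt (hγcont t ht)
    · intro t ht
      have hc' := hF _ (hγmem t (Ioo_subset_Icc_self ht))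
      have := HasDerivAt.scomp (h := γ) (x := t) hc' (hγderiv t ht)
      convert this using 1
      · rfl
      simp only [smul_eq_mul]
      ring
    · apply ContinuousOn.intervalIntegrable
      rw [Set.uIcc_of_le hℓ.le]
      have hfγ : ContinuousOn (fun t => f (γ t)) (Icc ℓ₁ ℓ₂) := fun t ht =>
        ((hfan _ (hγO t ht)).continuousAt).comp_continuousWithinAt (hγcont t ht)
      exact hfγ.mul (continuousOn_const.add
        ((Complex.continuous_ofReal.comp_continuousOn hσ').mul continuousOn_const))
  -- Step 3: vertical edges
  set s : ℝ := σ ℓ₁ with hs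
  have hsmem : s ∈ Icc 0 δ := hσrange ℓ₁ ⟨le_refl _, hℓ.le⟩
  have hvert : ∀ x : ℝ, x ∈ Icc ℓ₁ ℓ₂ →
      F ((x : ℂ) + (s : ℂ) * Complex.I) - F (x : ℂ) =
        ∫ τ in (0 : ℝ)..s, Complex.I * f ((x : ℂ) + (τ : ℂ) * Complex.I) := by
    intro x hx
    have key := intervalIntegral.integral_eq_sub_of_hasDerivAt
      (f := fun τ : ℝ => F ((x : ℂ) + (τ : ℂ) * Complex.I))
      (f' := fun τ : ℝ => Complex.I * f ((x : ℂ) + (τ : ℂ) * Complex.I))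
      (a := 0) (b := s) ?_ ?_
    · rw [key]; simp
    · intro τ hτ
      rw [Set.uIcc_of_le hsmem.1] at hτ
      have hτδ : τ ∈ Icc 0 δ := ⟨hτ.1, hτ.2.trans hsmem.2⟩
      have hmem : ((x : ℂ) + (τ : ℂ) * Complex.I) ∈ Ioo a b ×ℂ Ioo c d :=
        hV _ (by simpa using hx) (by simpa using hτδ)
      have hin : HasDerivAt (fun τ : ℝ => (x : ℂ) + (τ : ℂ) * Complex.I) Complex.I τ := by
        have : HasDerivAt (fun τ : ℝ => ((τ : ℂ)) * Complex.I) Complex.I τ := by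
          simpa using ((hasDerivAt_id τ).ofReal_comp.mul_const Complex.I)
        simpa using this.const_add ((x : ℂ))
      have := HasDerivAt.scomp (h := fun τ : ℝ => (x : ℂ) + (τ : ℂ) * Complex.I) (x := τ)
        (hF _ hmem) hin
      simpa [smul_eq_mul, Function.comp_def] using this
    · apply ContinuousOn.intervalIntegrable
      rw [Set.uIcc_of_le hsmem.1]
      apply ContinuousOn.mul continuousOn_const
      apply hfd.continuousOn.comp (by fun_prop)
      intro τ hτ
      have hτδ : τ ∈ Icc 0 δ := ⟨hτ.1, hτ.2.trans hsmem.2⟩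
      have hre' : ((x : ℂ) + (τ : ℂ) * Complex.I).re = x := by simp
      have him' : ((x : ℂ) + (τ : ℂ) * Complex.I).im = τ := by simp
      refine ⟨?_, ?_⟩
      · rw [mem_preimage, hre']
        exact ⟨by simp only [ha]; linarith [hx.1], by simp only [hb]; linarith [hx.2]⟩
      · rw [mem_preimage, him']
        exact ⟨by simp only [hc]; linarith [hτδ.1], by simp only [hd]; linarith [hτδ.2]⟩
  have hv1 := hvert ℓ₁ ⟨le_refl _, hℓ.le⟩
  have hv2 := hvert ℓ₂ ⟨hℓ.le, le_refl _⟩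
  have hintcong : (∫ τ in (0 : ℝ)..s, Complex.I * f ((ℓ₁ : ℂ) + (τ : ℂ) * Complex.I)) =
      ∫ τ in (0 : ℝ)..s, Complex.I * f ((ℓ₂ : ℂ) + (τ : ℂ) * Complex.I) := by
    apply intervalIntegral.integral_congr
    intro τ hτ
    rw [Set.uIcc_of_le hsmem.1] at hτ
    simp only [hper τ ⟨hτ.1, hτ.2.trans hsmem.2⟩]
  have hγ1 : γ ℓ₁ = (ℓ₁ : ℂ) + (s : ℂ) * Complex.I := rfl
  have hγ2 : γ ℓ₂ = (ℓ₂ : ℂ) + (s : ℂ) * Complex.I := by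
    simp only [hγ]; rw [← hσends]
  rw [h1]
  rw [show (∫ t in ℓ₁..ℓ₂, f ((t : ℂ) + (σ t : ℂ) * Complex.I) * (1 + (σ' t : ℂ) * Complex.I)) =
      ∫ t in ℓ₁..ℓ₂, f (γ t) * (1 + (σ' t : ℂ) * Complex.I) from rfl, h2, hγ1, hγ2]
  rw [hintcong] at hv1
  linear_combination hv1 - hv2
end
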